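/- Fix a nonzero real number β. Let G = {(A_t, u(e₁+e₂) + βt e₃) | t, u ∈ ℝ} act on ℝ³ by (A, a)·x = Ax + a, where A_t = (cosh t)(E₁₁+E₂₂) + (sinh t)(E₁₂+E₂₁) + E₃₃. Then this action is proper: if sequences (t_n, u_n) in ℝ² and X_n in ℝ³ are such that X_n → X and (A_{t_n}, u_n(e₁+e₂) + βt_n e₃)·X_n → Y, then t_n converges to (Y₃ - X₃)/β and u_n converges to Y₁ - X₁ cosh((Y₃-X₃)/β) - X₂ sinh((Y₃-X₃)/β). -/

import Mathlib

open Filter Topology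

/-- A_t = (cosh t)(E₁₁+E₂₂) + (sinh t)(E₁₂+E₂₁) + E₃₃ -/
noncomputable def At (t : ℝ) : Matrix (Fin 3) (Fin 3) ℝ :=
  !![Real.cosh t, Real.sinh t, 0; Real.sinh t, Real.cosh t, 0; 0, 0, 1]

/-- The action of the group element with parameters (t,u) on x ∈ ℝ³. -/
noncomputable def act (β t u : ℝ) (x : Fin 3 → ℝ) : Fin 3 → ℝ :=
  (At t).mulVec x + u • ![1, 1, 0] + (β * t) • ![0, 0, 1]

lemma act_two (β t u : ℝ) (x : Fin 3 → ℝ) : act β t u x 2 = x 2 + β * t := by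
  simp [act, At, Matrix.mulVec, dotProduct, Fin.sum_univ_three]

lemma act_zero (β t u : ℝ) (x : Fin 3 → ℝ) :
    act β t u x 0 = Real.cosh t * x 0 + Real.sinh t * x 1 + u := by
  simp [act, At, Matrix.mulVec, dotProduct, Fin.sum_univ_three]

/-- Properness of the action of G = {(A_t, u(e₁+e₂)+βt e₃)} for β ≠ 0:
if X_n → X and g_n·X_n → Y then the group parameters converge. -/
theorem proper_action_case_d (β : ℝ) (hβ : β ≠ 0)
    (t u : ℕ → ℝ) (Xn : ℕ → Fin 3 → ℝ) (X Y : Fin 3 → ℝ)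
    (hX : Tendsto Xn atTop (𝓝 X))
    (hY : Tendsto (fun n => act β (t n) (u n) (Xn n)) atTop (𝓝 Y)) :
    Tendsto t atTop (𝓝 ((Y 2 - X 2) / β)) ∧
    Tendsto u atTop (𝓝 (Y 0 - X 0 * Real.cosh ((Y 2 - X 2) / β)
      - X 1 * Real.sinh ((Y 2 - X 2) / β))) := by
  have hX0 : Tendsto (fun n => Xn n 0) atTop (𝓝 (X 0)) :=
    ((continuous_apply (0 : Fin 3)).tendsto X).comp hX
  have hX1 : Tendsto (fun n => Xn n 1) atTop (𝓝 (X 1)) :=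
    ((continuous_apply (1 : Fin 3)).tendsto X).comp hX
  have hX2 : Tendsto (fun n => Xn n 2) atTop (𝓝 (X 2)) :=
    ((continuous_apply (2 : Fin 3)).tendsto X).comp hX
  have hY0 : Tendsto (fun n => act β (t n) (u n) (Xn n) 0) atTop (𝓝 (Y 0)) :=
    ((continuous_apply (0 : Fin 3)).tendsto Y).comp hY
  have hY2 : Tendsto (fun n => act β (t n) (u n) (Xn n) 2) atTop (𝓝 (Y 2)) :=
    ((continuous_apply (2 : Fin 3)).tendsto Y).comp hY
  have ht : Tendsto t atTop (𝓝 ((Y 2 - X 2) / β)) := by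
    have : Tendsto (fun n => (act β (t n) (u n) (Xn n) 2 - Xn n 2) / β) atTop
        (𝓝 ((Y 2 - X 2) / β)) := (hY2.sub hX2).div_const β
    convert this using 2 with n
    rw [act_two]; field_simp; ring
  refine ⟨ht, ?_⟩
  have hc : Tendsto (fun n => Real.cosh (t n)) atTop (𝓝 (Real.cosh ((Y 2 - X 2) / β))) :=
    (Real.continuous_cosh.tendsto _).comp ht
  have hs : Tendsto (fun n => Real.sinh (t n)) atTop (𝓝 (Real.sinh ((Y 2 - X 2) / β))) :=
    (Real.continuous_sinh.tendsto _).comp ht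
  have : Tendsto (fun n => act β (t n) (u n) (Xn n) 0 - Real.cosh (t n) * Xn n 0
      - Real.sinh (t n) * Xn n 1) atTop
      (𝓝 (Y 0 - Real.cosh ((Y 2 - X 2) / β) * X 0 - Real.sinh ((Y 2 - X 2) / β) * X 1)) :=
    (hY0.sub (hc.mul hX0)).sub (hs.mul hX1)
  have h2 : Tendsto u atTop
      (𝓝 (Y 0 - Real.cosh ((Y 2 - X 2) / β) * X 0 - Real.sinh ((Y 2 - X 2) / β) * X 1)) := by
    convert this using 2 with n
    rw [act_zero]; ring
  convert h2 using 2; ring
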